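/- Let B ⊂ W be a bounded subset of a Hilbert space W and w ∈ L²(0,T; W). Then the operator Y* : W → L²(0,T;ℝ), (Y*f)(t) = (f, w(t))_W, maps B to a relatively compact subset of L²(0,T;ℝ); i.e., Y* is a compact operator. -/

import Mathlib

open MeasureTheory

-- rank one operators are compact
lemma rankOne_compact {E F : Type*} [NormedAddCommGroup E] [NormedSpace ℝ E]
    [NormedAddCommGroup F] [NormedSpace ℝ F] (L : E →L[ℝ] ℝ) (x : F) :
    IsCompactOperator (L.smulRight x) := by
  refine ⟨(fun a : ℝ => a • x) '' Set.Icc (-‖L‖) ‖L‖,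
    (isCompact_Icc.image (by fun_prop)), ?_⟩
  refine Filter.mem_of_superset (Metric.closedBall_mem_nhds 0 one_pos) ?_
  intro z hz
  refine ⟨L z, ?_, rfl⟩
  have h1 : |L z| ≤ ‖L‖ * ‖z‖ := L.le_opNorm z
  have h2 : ‖z‖ ≤ 1 := by simpa using hz
  have : |L z| ≤ ‖L‖ := h1.trans (by nlinarith [norm_nonneg L])
  exact abs_le.mp this |>.imp id id |> fun h => ⟨h.1, h.2⟩

lemma sum_compact {ι E F : Type*} [NormedAddCommGroup E] [NormedSpace ℝ E]
    [NormedAddCommGroup F] [NormedSpace ℝ F] (t : Finset ι) (f : ι → E →L[ℝ] F)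
    (h : ∀ i ∈ t, IsCompactOperator (f i)) :
    IsCompactOperator (∑ i ∈ t, f i) := by
  classical
  induction t using Finset.induction with
  | empty => simpa using (isCompactOperator_zero : IsCompactOperator (0 : E → F))
  | @insert a s hx ih =>
    rw [Finset.sum_insert hx]
    have := (h _ (Finset.mem_insert_self _ _)).add (ih fun i hi => h i (Finset.mem_insert_of_mem hi))
    exact this

lemma Lp_coeFn_sum {ι α E : Type*} [MeasurableSpace α] {μ : Measure α}
    [NormedAddCommGroup E] {p : ENNReal} (t : Finset ι) (f : ι → Lp E p μ) :
    ⇑(∑ i ∈ t, f i) =ᵐ[μ] fun x => ∑ i ∈ t, f i x := by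
  classical
  induction t using Finset.induction with
  | empty =>
    filter_upwards [Lp.coeFn_zero E p μ] with x h
    simpa using h
  | @insert a s hx ih =>
    rw [Finset.sum_insert hx]
    filter_upwards [Lp.coeFn_add (f a) (∑ i ∈ s, f i), ih] with x h1 h2
    rw [Finset.sum_insert hx, ← h2, ← Pi.add_apply, ← h1]

set_option synthInstance.maxHeartbeats 1000000 in
lemma aux_compact {W : Type*} [NormedAddCommGroup W] [InnerProductSpace ℝ W]
    (μ : Measure ℝ) [IsFiniteMeasure μ] (w : ℝ → W)
    (hw : MemLp w 2 μ) (K : W →L[ℝ] Lp ℝ 2 μ)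
    (hK : ∀ f : W, (K f : ℝ → ℝ) =ᵐ[μ] fun t => (inner ℝ f (w t) : ℝ)) :
    IsCompactOperator K := by
  haveI : Fact ((1:ENNReal) ≤ 2) := ⟨one_le_two⟩
  have hclosed : IsClosed {f : W →L[ℝ] Lp ℝ 2 μ | IsCompactOperator f} :=
    isClosed_setOf_isCompactOperator
  suffices hmem : K ∈ closure {f : W →L[ℝ] Lp ℝ 2 μ | IsCompactOperator f} by
    exact hclosed.closure_subset hmem
  rw [Metric.mem_closure_iff]
  intro ε hε
  obtain ⟨s, hs, hsmem⟩ := hw.exists_simpleFunc_eLpNorm_sub_lt (by norm_num)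
    (ε := ENNReal.ofReal ε) (ENNReal.ofReal_pos.mpr hε).ne'
  -- the approximating finite-rank operator
  let g : W → Lp ℝ 2 μ := fun c =>
    indicatorConstLp 2 (s.measurableSet_fiber c) (measure_ne_top μ _) (1:ℝ)
  let Ks : W →L[ℝ] Lp ℝ 2 μ := ∑ c ∈ s.range, (innerSL ℝ c).smulRight (g c)
  have hKs : IsCompactOperator ⇑Ks := by
    have h := sum_compact s.range (fun c => (innerSL ℝ c).smulRight (g c))
      (fun c _ => rankOne_compact _ _)
    rwa [← ContinuousLinearMap.coe_sum'] at h
  -- a.e. representation of Ks f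
  have hKsf : ∀ f : W, (Ks f : ℝ → ℝ) =ᵐ[μ] fun t => (inner ℝ f (s t) : ℝ) := by
    intro f
    have h1 : Ks f = ∑ c ∈ s.range, (inner ℝ c f : ℝ) • g c := by
      simp [Ks, ContinuousLinearMap.sum_apply]
    rw [h1]
    have h2 := Lp_coeFn_sum s.range (fun c => (inner ℝ c f : ℝ) • g c)
    have h5 : ∀ᵐ t ∂μ, ∀ c ∈ ((s.range : Finset W) : Set W),
        ((inner ℝ c f : ℝ) • g c : Lp ℝ 2 μ) t
          = (inner ℝ c f : ℝ) * Set.indicator (s ⁻¹' {c}) (fun _ => (1:ℝ)) t := by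
      refine (MeasureTheory.ae_ball_iff (s.range.finite_toSet.countable)).mpr ?_
      intro c _
      filter_upwards [Lp.coeFn_smul ((inner ℝ c f : ℝ)) (g c),
        indicatorConstLp_coeFn (p := 2) (μ := μ)
          (hs := s.measurableSet_fiber c) (hμs := measure_ne_top μ _) (c := (1:ℝ))]
        with t ht1 ht2
      rw [ht1]
      simp [g, ht2]
    filter_upwards [h2, h5] with t ht hall
    rw [ht, Finset.sum_congr rfl (fun c hc => hall c (Finset.mem_coe.mpr hc))]
    have key : ∑ c ∈ s.range, (inner ℝ c f : ℝ)
        * Set.indicator (s ⁻¹' {c}) (fun _ => (1:ℝ)) t = (inner ℝ (s t) f : ℝ) := by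
      rw [Finset.sum_eq_single (s t)]
      · simp [Set.indicator_of_mem, Set.mem_preimage]
      · intro b _ hne
        have hb : t ∉ s ⁻¹' {b} := by
          simp only [Set.mem_preimage, Set.mem_singleton_iff]
          exact fun h => hne h.symm
        simp [Set.indicator_of_notMem hb]
      · intro h; exact absurd (SimpleFunc.mem_range_self s t) h
    rw [key, real_inner_comm]
  -- norm estimate
  have hbound : ∀ f : W, ‖(K - Ks) f‖ ≤ (eLpNorm (w - ⇑s) 2 μ).toReal * ‖f‖ := by
    intro f
    have hae : (⇑(K f - Ks f) : ℝ → ℝ) =ᵐ[μ] fun t => (inner ℝ f (w t - s t) : ℝ) := by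
      filter_upwards [Lp.coeFn_sub (K f) (Ks f), hK f, hKsf f] with t h1 h2 h3
      exact h1.trans (by rw [Pi.sub_apply, h2, h3, inner_sub_right])
    rw [ContinuousLinearMap.sub_apply, Lp.norm_def, eLpNorm_congr_ae hae]
    have hle : eLpNorm (fun t => (inner ℝ f (w t - s t) : ℝ)) 2 μ
        ≤ eLpNorm (‖f‖ • (w - ⇑s)) 2 μ := by
      apply eLpNorm_mono_ae
      filter_upwards with t
      have h := abs_real_inner_le_norm f (w t - s t)
      simp only [Pi.smul_apply, Pi.sub_apply, norm_smul, abs_norm, norm_norm,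
        Real.norm_eq_abs]
      exact h
    have heq : eLpNorm (‖f‖ • (w - ⇑s)) 2 μ = ‖f‖₊ • eLpNorm (w - ⇑s) 2 μ := by
      rw [eLpNorm_const_smul]
      simp [ENNReal.smul_def, enorm_eq_nnnorm]
    rw [heq] at hle
    have hfin : (‖f‖₊ • eLpNorm (w - ⇑s) 2 μ) ≠ ⊤ := by
      rw [ENNReal.smul_def]
      exact ENNReal.mul_ne_top (by simp) (hs.trans_le le_top).ne
    calc (eLpNorm (fun t => (inner ℝ f (w t - s t) : ℝ)) 2 μ).toReal
        ≤ (‖f‖₊ • eLpNorm (w - ⇑s) 2 μ).toReal := ENNReal.toReal_mono hfin hle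
      _ = (eLpNorm (w - ⇑s) 2 μ).toReal * ‖f‖ := by
          rw [ENNReal.smul_def, smul_eq_mul, ENNReal.toReal_mul]
          simp [mul_comm]
  refine ⟨Ks, hKs, ?_⟩
  rw [dist_eq_norm]
  have hop : ‖K - Ks‖ ≤ (eLpNorm (w - ⇑s) 2 μ).toReal :=
    ContinuousLinearMap.opNorm_le_bound _ ENNReal.toReal_nonneg hbound
  exact hop.trans_lt (ENNReal.toReal_lt_of_lt_ofReal hs)

/-- The operator `Y* : W → L²(0,T;ℝ)`, `(Y*f)(t) = (f, w(t))_W`, is compact: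
it maps bounded subsets of `W` to relatively compact subsets of `L²(0,T)`. -/
theorem stmt_10
    {W : Type*} [NormedAddCommGroup W] [InnerProductSpace ℝ W]
    [CompleteSpace W]
    (T : ℝ) (hT : 0 < T) (w : ℝ → W)
    (hw : MemLp w 2 (volume.restrict (Set.Icc 0 T)))
    (K : W →L[ℝ] Lp ℝ 2 (volume.restrict (Set.Icc 0 T)))
    (hK : ∀ f : W,
      (K f : ℝ → ℝ) =ᵐ[volume.restrict (Set.Icc 0 T)]
        fun t => (inner ℝ f (w t) : ℝ)) :
    (∀ B : Set W, Bornology.IsBounded B →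
        IsCompact (closure ((fun f => K f) '' B)))
      ∧ IsCompactOperator K := by
  haveI : IsFiniteMeasure (volume.restrict (Set.Icc (0:ℝ) T)) := by
    constructor
    rw [Measure.restrict_apply_univ]
    exact measure_Icc_lt_top
  have hcpt : IsCompactOperator ⇑K := aux_compact _ w hw K hK
  refine ⟨fun B hB => ?_, hcpt⟩
  exact IsCompactOperator.isCompact_closure_image_of_bounded
    (𝕜₁ := ℝ) (f := (K : W →ₗ[ℝ] Lp ℝ 2 (volume.restrict (Set.Icc 0 T)))) hcpt hB
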